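/- Let H : ℝ^n_{>0} → ℝ be differentiable and P* strictly positive. If the directional derivative of H at every point P in direction v is ≤ 0 for every velocity v realizable at P by a Markov system with detailed balance and equilibrium P*, then the same holds for every velocity realizable at P by a general Markov system with equilibrium P* (i.e. Lyapunov functions for all detailed-balance systems with equilibrium P* are Lyapunov functions for all Markov systems with equilibrium P*). -/

import Mathlib

open Finset

/-- Key combinatorial lemma: if `w` is a nonnegative matrix whose row sums equal
the corresponding column sums, and `f` is monotone along `x`, then the
"entropy production"-type sum is nonpositive. Proof by induction on the number
of distinct values of `x`, collapsing the top level set at each step. -/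
private theorem balanced_sum_nonpos (n : ℕ) :
    ∀ (m : ℕ) (w : Fin n → Fin n → ℝ) (f x : Fin n → ℝ),
    (∀ i j, 0 ≤ w i j) →
    (∀ i, ∑ j, w i j = ∑ j, w j i) →
    (∀ i j, x i < x j → f i ≤ f j) →
    ((univ : Finset (Fin n)).image x).card ≤ m →
    ∑ i, ∑ j, w i j * f i * (x j - x i) ≤ 0 := by
  intro m
  induction m with
  | zero =>
    intro w f x hw hbal hmono hcard
    have h0 : ((univ : Finset (Fin n)).image x) = ∅ := Finset.card_eq_zero.mp (Nat.le_zero.mp hcard)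
    have h1 : (univ : Finset (Fin n)) = ∅ := Finset.image_eq_empty.mp h0
    rw [h1]
    simp
  | succ m ih =>
    intro w f x hw hbal hmono hcard
    by_cases hall : ∀ i j : Fin n, x i = x j
    · have : ∑ i, ∑ j, w i j * f i * (x j - x i) = 0 :=
        Finset.sum_eq_zero fun i _ => Finset.sum_eq_zero fun j _ => by
          rw [hall j i, sub_self, mul_zero]
      rw [this]
    · push_neg at hall
      obtain ⟨i1, j1, hne1⟩ := hall
      obtain ⟨i0, -, hmax⟩ := Finset.exists_max_image (univ : Finset (Fin n)) x ⟨i1, mem_univ _⟩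
      have hBne : ((univ : Finset (Fin n)).filter (fun i => x i ≠ x i0)).Nonempty := by
        rcases eq_or_ne (x i1) (x i0) with h | h
        · exact ⟨j1, mem_filter.mpr ⟨mem_univ _, by rw [← h]; exact fun hh => hne1 hh.symm⟩⟩
        · exact ⟨i1, mem_filter.mpr ⟨mem_univ _, h⟩⟩
      obtain ⟨j0, hj0B, hmaxB⟩ := Finset.exists_max_image _ x hBne
      have hj0ne : x j0 ≠ x i0 := (mem_filter.mp hj0B).2
      have hj0lt : x j0 < x i0 := lt_of_le_of_ne (hmax j0 (mem_univ _)) hj0ne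
      set c := x i0 - x j0 with hc
      have hcpos : 0 < c := sub_pos.mpr hj0lt
      set x' : Fin n → ℝ := fun i => if x i = x i0 then x j0 else x i with hx'
      set d : Fin n → ℝ := fun i => if x i = x i0 then c else 0 with hd
      have hxd : ∀ i, x i - x' i = d i := by
        intro i
        simp only [hx', hd]
        split_ifs with h
        · rw [h, hc]
        · rw [sub_self]
      have hsplit : ∑ i, ∑ j, w i j * f i * (x j - x i)
          = (∑ i, ∑ j, w i j * f i * (x' j - x' i)) + ∑ i, ∑ j, w i j * f i * (d j - d i) := by
        rw [← Finset.sum_add_distrib]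
        refine Finset.sum_congr rfl fun i _ => ?_
        rw [← Finset.sum_add_distrib]
        refine Finset.sum_congr rfl fun j _ => ?_
        have h1 := hxd i; have h2 := hxd j
        linear_combination (w i j * f i) * h2 - (w i j * f i) * h1
      have hsub : ((univ : Finset (Fin n)).image x') ⊆ ((univ : Finset (Fin n)).image x).erase (x i0) := by
        intro a ha
        obtain ⟨i, -, rfl⟩ := mem_image.mp ha
        simp only [hx']
        split_ifs with h
        · exact mem_erase.mpr ⟨hj0ne, mem_image_of_mem x (mem_univ j0)⟩
        · exact mem_erase.mpr ⟨h, mem_image_of_mem x (mem_univ i)⟩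
      have hcard' : ((univ : Finset (Fin n)).image x').card ≤ m := by
        have h1 := Finset.card_le_card hsub
        rw [Finset.card_erase_of_mem (mem_image_of_mem x (mem_univ i0))] at h1
        omega
      have hmono' : ∀ i j, x' i < x' j → f i ≤ f j := by
        intro i j hij
        simp only [hx'] at hij
        split_ifs at hij with hi hj hj2
        · exact absurd hij (lt_irrefl _)
        · exact absurd hij (not_lt.mpr (hmaxB j (mem_filter.mpr ⟨mem_univ _, hj⟩)))
        · exact hmono i j (by rw [hj2]; exact lt_of_le_of_ne (hmax i (mem_univ _)) hi)
        · exact hmono i j hij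
      have hsum1 := ih w f x' hw hbal hmono' hcard'
      obtain ⟨k0, hk0A, hk0min⟩ := Finset.exists_min_image
        ((univ : Finset (Fin n)).filter (fun i => x i = x i0)) f ⟨i0, mem_filter.mpr ⟨mem_univ _, rfl⟩⟩
      have hxk0 : x k0 = x i0 := (mem_filter.mp hk0A).2
      have hterm : ∀ i j : Fin n, w i j * f i * (d j - d i) ≤ w i j * f k0 * (d j - d i) := by
        intro i j
        have hkey : (f i - f k0) * (d j - d i) ≤ 0 := by
          simp only [hd]
          split_ifs with hj hi hi
          · rw [sub_self, mul_zero]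
          · have hfi : f i ≤ f k0 :=
              hmono i k0 (by rw [hxk0]; exact lt_of_le_of_ne (hmax i (mem_univ _)) hi)
            nlinarith
          · have hfi : f k0 ≤ f i := hk0min i (mem_filter.mpr ⟨mem_univ _, hi⟩)
            nlinarith
          · rw [sub_self, mul_zero]
        nlinarith [mul_nonpos_iff.mpr (Or.inr ⟨hkey, hw i j⟩)]
      have hsum2 : ∑ i, ∑ j, w i j * f i * (d j - d i) ≤ ∑ i, ∑ j, w i j * f k0 * (d j - d i) :=
        Finset.sum_le_sum fun i _ => Finset.sum_le_sum fun j _ => hterm i j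
      have hT : (∑ i, ∑ j, w i j * d j) = ∑ i, ∑ j, w i j * d i := by
        rw [Finset.sum_comm]
        refine Finset.sum_congr rfl fun i _ => ?_
        rw [← Finset.sum_mul, ← Finset.sum_mul, hbal i]
      have hzero : ∑ i, ∑ j, w i j * f k0 * (d j - d i) = 0 := by
        calc ∑ i, ∑ j, w i j * f k0 * (d j - d i)
            = f k0 * ((∑ i, ∑ j, w i j * d j) - ∑ i, ∑ j, w i j * d i) := by
              rw [mul_sub, Finset.mul_sum, Finset.mul_sum, ← Finset.sum_sub_distrib]
              refine Finset.sum_congr rfl fun i _ => ?_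
              rw [Finset.mul_sum, Finset.mul_sum, ← Finset.sum_sub_distrib]
              exact Finset.sum_congr rfl fun j _ => by ring
          _ = 0 := by rw [hT, sub_self, mul_zero]
      linarith [hsum1, hsum2, hzero, hsplit.le, hsplit.ge]

/-- The elementary detailed-balance system exchanging only the pair `a`, `b`,
together with the explicit form of its velocity. -/
private theorem elementary_system (n : ℕ) (pstar p : Fin n → ℝ) (hpos : ∀ i, 0 < pstar i)
    (a b : Fin n) (hne : a ≠ b) :
    ∃ q' : Fin n → Fin n → ℝ,
      (∀ i j, i ≠ j → 0 ≤ q' i j) ∧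
      (∀ i j, i ≠ j → q' i j * pstar j = q' j i * pstar i) ∧
      ((fun k => ∑ j ∈ Finset.univ.filter (· ≠ k), (q' k j * p j - q' j k * p k))
        = fun k => if k = a then pstar a * p b - pstar b * p a
            else if k = b then -(pstar a * p b - pstar b * p a) else 0) := by
  set q' : Fin n → Fin n → ℝ :=
    fun i j => if (i = a ∧ j = b) ∨ (i = b ∧ j = a) then pstar i else 0 with hq'
  have hq'val : ∀ i j, q' i j = if (i = a ∧ j = b) ∨ (i = b ∧ j = a) then pstar i else 0 :=
    fun i j => rfl
  refine ⟨q', ?_, ?_, ?_⟩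
  · intro i j _
    rw [hq'val]
    split_ifs with h
    · rcases h with ⟨rfl, -⟩ | ⟨rfl, -⟩ <;> exact (hpos _).le
    · exact le_rfl
  · intro i j hij
    rw [hq'val, hq'val]
    split_ifs with h1 h2 h2
    · rcases h1 with ⟨rfl, rfl⟩ | ⟨rfl, rfl⟩ <;> ring
    · exact absurd (by tauto) h2
    · exact absurd (by tauto) h1
    · ring
  · funext k
    have hext : ∑ j ∈ Finset.univ.filter (· ≠ k), (q' k j * p j - q' j k * p k)
        = ∑ j, (q' k j * p j - q' j k * p k) := by
      apply Finset.sum_subset (Finset.filter_subset _ _)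
      intro j _ hj
      have hjk : j = k := by simpa using hj
      subst hjk
      ring
    rw [hext]
    by_cases hka : k = a
    · rw [if_pos hka]
      have hterm : ∀ j ∈ (univ : Finset (Fin n)), (q' k j * p j - q' j k * p k)
          = if j = b then pstar a * p b - pstar b * p a else 0 := by
        intro j _
        by_cases hjb : j = b
        · rw [if_pos hjb, hq'val, hq'val,
            if_pos (Or.inl ⟨hka, hjb⟩), if_pos (Or.inr ⟨hjb, hka⟩)]
          rw [hka, hjb]
        · rw [if_neg hjb, hq'val, hq'val, if_neg, if_neg]
          · ring
          · rintro (⟨-, h⟩ | ⟨h, -⟩)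
            · exact hne (hka.symm.trans h)
            · exact hjb h
          · rintro (⟨-, h⟩ | ⟨h, -⟩)
            · exact hjb h
            · exact hne (hka.symm.trans h)
      rw [Finset.sum_congr rfl hterm]
      simp
    · rw [if_neg hka]
      by_cases hkb : k = b
      · rw [if_pos hkb]
        have hterm : ∀ j ∈ (univ : Finset (Fin n)), (q' k j * p j - q' j k * p k)
            = if j = a then -(pstar a * p b - pstar b * p a) else 0 := by
          intro j _
          by_cases hja : j = a
          · rw [if_pos hja, hq'val, hq'val,
              if_pos (Or.inr ⟨hkb, hja⟩), if_pos (Or.inl ⟨hja, hkb⟩)]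
            rw [hkb, hja]; ring
          · rw [if_neg hja, hq'val, hq'val, if_neg, if_neg]
            · ring
            · rintro (⟨h, -⟩ | ⟨-, h⟩)
              · exact hja h
              · exact hka h
            · rintro (⟨h, -⟩ | ⟨-, h⟩)
              · exact hka h
              · exact hja h
        rw [Finset.sum_congr rfl hterm]
        simp
      · rw [if_neg hkb]
        refine Finset.sum_eq_zero fun j _ => ?_
        rw [hq'val, hq'val, if_neg, if_neg]
        · ring
        · rintro (⟨-, h⟩ | ⟨-, h⟩)
          · exact hkb h
          · exact hka h
        · rintro (⟨h, -⟩ | ⟨h, -⟩)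
          · exact hka h
          · exact hkb h

/-- If `H` is a Lyapunov function for every Markov system with detailed
balance and equilibrium `P*` (directional derivative ≤ 0 along every
realizable velocity at every positive point), then `H` is a Lyapunov function
for every general Markov system with equilibrium `P*`. -/
theorem lyapunov_detailed_balance_implies_general (n : ℕ)
    (H : (Fin n → ℝ) → ℝ) (pstar : Fin n → ℝ) (hpos : ∀ i, 0 < pstar i)
    (hdiff : ∀ p : Fin n → ℝ, (∀ i, 0 < p i) → DifferentiableAt ℝ H p)
    (hDB : ∀ p : Fin n → ℝ, (∀ i, 0 < p i) →
      ∀ q : Fin n → Fin n → ℝ, (∀ i j, i ≠ j → 0 ≤ q i j) →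
      (∀ i j, i ≠ j → q i j * pstar j = q j i * pstar i) →
      fderiv ℝ H p (fun i =>
        ∑ j ∈ Finset.univ.filter (· ≠ i), (q i j * p j - q j i * p i)) ≤ 0) :
    ∀ p : Fin n → ℝ, (∀ i, 0 < p i) →
      ∀ q : Fin n → Fin n → ℝ, (∀ i j, i ≠ j → 0 ≤ q i j) →
      (∀ i, ∑ j ∈ Finset.univ.filter (· ≠ i), q i j * pstar j =
        (∑ j ∈ Finset.univ.filter (· ≠ i), q j i) * pstar i) →
      fderiv ℝ H p (fun i =>
        ∑ j ∈ Finset.univ.filter (· ≠ i), (q i j * p j - q j i * p i)) ≤ 0 := by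
  intro p hp q hq hbalq
  classical
  set L := fderiv ℝ H p with hL
  set f : Fin n → ℝ := fun i => L (Pi.single i 1) with hfdef
  -- linear expansion of L
  have hexp : ∀ g : Fin n → ℝ, L g = ∑ i, g i * f i := by
    intro g
    have hgsum : g = ∑ i, g i • (Pi.single i 1 : Fin n → ℝ) := by
      funext k
      rw [Finset.sum_apply]
      simp [Pi.single_apply]
    calc L g = L (∑ i, g i • (Pi.single i 1 : Fin n → ℝ)) := by rw [← hgsum]
      _ = ∑ i, g i * f i := by
          rw [map_sum]
          exact Finset.sum_congr rfl fun i _ => by rw [map_smul]; rfl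
  set x : Fin n → ℝ := fun i => p i / pstar i with hxdef
  have hxval : ∀ i, x i = p i / pstar i := fun i => rfl
  -- monotonicity of f along x, from the detailed-balance hypothesis
  have hmono : ∀ a b, x a < x b → f a ≤ f b := by
    intro a b hab
    have hne : a ≠ b := by rintro rfl; exact lt_irrefl _ hab
    obtain ⟨q', hq'nn, hq'db, hq'vel⟩ := elementary_system n pstar p hpos a b hne
    have h0 := hDB p hp q' hq'nn hq'db
    rw [hq'vel, hexp] at h0
    have hterm2 : ∀ k ∈ (univ : Finset (Fin n)),
        (if k = a then pstar a * p b - pstar b * p a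
          else if k = b then -(pstar a * p b - pstar b * p a) else 0) * f k
        = (if k = a then (pstar a * p b - pstar b * p a) * f k else 0)
          + (if k = b then -(pstar a * p b - pstar b * p a) * f k else 0) := by
      intro k _
      by_cases hka : k = a
      · have hkb : ¬ k = b := fun h => hne (hka.symm.trans h)
        rw [if_pos hka, if_pos hka, if_neg hkb]
        ring
      · rw [if_neg hka, if_neg hka]
        by_cases hkb : k = b
        · rw [if_pos hkb, if_pos hkb]
          ring
        · rw [if_neg hkb, if_neg hkb]
          ring
    rw [Finset.sum_congr rfl hterm2, Finset.sum_add_distrib] at h0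
    rw [Finset.sum_ite_eq' univ a, Finset.sum_ite_eq' univ b] at h0
    simp only [mem_univ, if_pos] at h0
    -- h0 : dd * f a + -dd * f b ≤ 0
    have hdd : 0 < pstar a * p b - pstar b * p a := by
      rw [hxval, hxval, div_lt_div_iff₀ (hpos a) (hpos b)] at hab
      nlinarith
    nlinarith
  -- the balanced matrix w
  set w : Fin n → Fin n → ℝ := fun i j => if i = j then 0 else q i j * pstar j with hwdef
  have hwval : ∀ i j, w i j = if i = j then 0 else q i j * pstar j := fun i j => rfl
  have hwnn : ∀ i j, 0 ≤ w i j := by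
    intro i j
    rw [hwval]
    split_ifs with h
    · exact le_rfl
    · exact mul_nonneg (hq i j h) (hpos j).le
  have hsum_univ : ∀ (i : Fin n) (g : Fin n → ℝ), g i = 0 →
      ∑ j ∈ Finset.univ.filter (· ≠ i), g j = ∑ j, g j := by
    intro i g hg
    apply Finset.sum_subset (Finset.filter_subset _ _)
    intro j _ hj
    have hji : j = i := by simpa using hj
    rwa [hji]
  have hwbal : ∀ i, ∑ j, w i j = ∑ j, w j i := by
    intro i
    rw [← hsum_univ i (fun j => w i j) (by simp [hwval]),
        ← hsum_univ i (fun j => w j i) (by simp [hwval])]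
    have h1 : ∀ j ∈ Finset.univ.filter (· ≠ i), w i j = q i j * pstar j := by
      intro j hj
      have hji : ¬ i = j := fun h => (by simpa using hj : j ≠ i) h.symm
      rw [hwval, if_neg hji]
    have h2 : ∀ j ∈ Finset.univ.filter (· ≠ i), w j i = q j i * pstar i := by
      intro j hj
      have hji : ¬ j = i := by simpa using hj
      rw [hwval, if_neg hji]
    rw [Finset.sum_congr rfl h1, Finset.sum_congr rfl h2, hbalq i, Finset.sum_mul]
  -- velocity rewrite
  have hv : ∀ i, (∑ j ∈ Finset.univ.filter (· ≠ i), (q i j * p j - q j i * p i))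
      = ∑ j, w i j * (x j - x i) := by
    intro i
    rw [← hsum_univ i (fun j => w i j * (x j - x i)) (by simp [hwval])]
    have h1 : ∀ j ∈ Finset.univ.filter (· ≠ i), w i j * (x j - x i)
        = q i j * p j - (q i j * pstar j) * x i := by
      intro j hj
      have hji : ¬ i = j := fun h => (by simpa using hj : j ≠ i) h.symm
      rw [hwval, if_neg hji, hxval, hxval]
      have hpj : pstar j ≠ 0 := (hpos j).ne'
      field_simp
    have h2 : (∑ j ∈ Finset.univ.filter (· ≠ i), q j i) * pstar i * x i
        = (∑ j ∈ Finset.univ.filter (· ≠ i), q j i) * p i := by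
      rw [hxval]
      have hpi : pstar i ≠ 0 := (hpos i).ne'
      field_simp
    have hR : ∑ j ∈ Finset.univ.filter (· ≠ i), w i j * (x j - x i)
        = (∑ j ∈ Finset.univ.filter (· ≠ i), q i j * p j)
          - (∑ j ∈ Finset.univ.filter (· ≠ i), q j i) * p i := by
      rw [Finset.sum_congr rfl h1, Finset.sum_sub_distrib, ← Finset.sum_mul, hbalq i, h2]
    rw [hR, Finset.sum_sub_distrib, Finset.sum_mul]
  -- conclude
  rw [hexp]
  have hfin : ∀ i ∈ (univ : Finset (Fin n)),
      (∑ j ∈ Finset.univ.filter (· ≠ i), (q i j * p j - q j i * p i)) * f i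
      = ∑ j, w i j * f i * (x j - x i) := by
    intro i _
    rw [hv i, Finset.sum_mul]
    exact Finset.sum_congr rfl fun j _ => by ring
  rw [Finset.sum_congr rfl hfin]
  exact balanced_sum_nonpos n ((univ : Finset (Fin n)).image x).card w f x hwnn hwbal hmono le_rfl
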